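/- arXiv:1108.2181 — 2 statements merged into one kernel-verified Lean document; each statement's English description precedes it below -/
import Mathlib

section
/- There is no algebra morphism L from the algebra of bounded real-valued functions on (0,∞) to ℝ satisfying liminf_{x→0} f(x) ≤ L(f) ≤ limsup_{x→0} f(x) for all bounded f, and additionally satisfying L(f∘g) = L(f) for every bounded f and every g : (0,∞)→(0,∞) with limit 0 at 0. -/
open Filter Set

/-- `f` is bounded on `(0,∞)`. -/
def BddOn (f : ℝ → ℝ) : Prop := ∃ M, ∀ x ∈ Set.Ioi (0:ℝ), |f x| ≤ M

/-- A limit notion at `0` on the algebra of bounded functions on `(0,∞)`: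
an algebra morphism to `ℝ`, monotone, lying between `liminf` and `limsup` at `0⁺`. -/
def IsLimitNotion (L : (ℝ → ℝ) → ℝ) : Prop :=
  (∀ f g, BddOn f → BddOn g → L (f + g) = L f + L g) ∧
  (∀ f g, BddOn f → BddOn g → L (f * g) = L f * L g) ∧
  (∀ c : ℝ, L (fun _ => c) = c) ∧
  (∀ f g, BddOn f → BddOn g → (∀ x ∈ Set.Ioi (0:ℝ), f x ≤ g x) → L f ≤ L g) ∧
  (∀ f, BddOn f →
    Filter.liminf f (nhdsWithin 0 (Set.Ioi 0)) ≤ L f ∧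
    L f ≤ Filter.limsup f (nhdsWithin 0 (Set.Ioi 0)))

/-- There is no limit notion at `0` that is moreover invariant under precomposition
by every map `(0,∞) → (0,∞)` tending to `0` at `0`. -/
theorem no_composition_invariant_limit_notion :
    ¬ ∃ L : (ℝ → ℝ) → ℝ, IsLimitNotion L ∧
      ∀ f, BddOn f → ∀ g : ℝ → ℝ, (∀ x ∈ Set.Ioi (0:ℝ), g x ∈ Set.Ioi (0:ℝ)) →
        Filter.Tendsto g (nhdsWithin 0 (Set.Ioi 0)) (nhds 0) →
        L (f ∘ g) = L f := by
  rintro ⟨L, ⟨hadd, hmul, hconst, hmono, -⟩, hcomp⟩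
  set u : ℝ → ℝ := fun x => Real.cos (1/x) with hu
  set v : ℝ → ℝ := fun x => Real.sin (1/x) with hv
  have hbu : BddOn u := ⟨1, fun x _ => Real.abs_cos_le_one _⟩
  have hbv : BddOn v := ⟨1, fun x _ => Real.abs_sin_le_one _⟩
  have heq : ∀ f g, BddOn f → BddOn g → (∀ x ∈ Set.Ioi (0:ℝ), f x = g x) → L f = L g := by
    intro f g hf hg h
    exact le_antisymm (hmono f g hf hg fun x hx => (h x hx).le)
      (hmono g f hg hf fun x hx => (h x hx).ge)
  set g : ℝ → ℝ := fun x => x / (1 + (Real.pi/2) * x) with hgdef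
  have hgpos : ∀ x ∈ Set.Ioi (0:ℝ), g x ∈ Set.Ioi (0:ℝ) := by
    intro x hx
    have hx' : (0:ℝ) < x := hx
    have hd : (0:ℝ) < 1 + (Real.pi/2) * x := by positivity
    exact div_pos hx' hd
  have hgt : Tendsto g (nhdsWithin 0 (Set.Ioi 0)) (nhds 0) := by
    have hc : ContinuousAt g 0 := by
      apply ContinuousAt.div continuousAt_id (by fun_prop)
      norm_num
    have h0 : g 0 = 0 := by simp [hgdef]
    have := hc.tendsto
    rw [h0] at this
    exact this.mono_left nhdsWithin_le_nhds
  have hinv : ∀ x ∈ Set.Ioi (0:ℝ), 1 / g x = 1/x + Real.pi/2 := by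
    intro x hx
    have hx' : (0:ℝ) < x := hx
    have hd : (0:ℝ) < 1 + (Real.pi/2) * x := by positivity
    rw [hgdef]
    field_simp
  -- u ∘ g = -v on (0,∞), v ∘ g = u on (0,∞)
  have hbnegv : BddOn ((fun _ => (-1:ℝ)) * v) := by
    refine ⟨1, fun x _ => ?_⟩
    simp [hv, abs_mul, Real.abs_sin_le_one]
  have h1 : L (u ∘ g) = L ((fun _ => (-1:ℝ)) * v) := by
    apply heq _ _ ⟨1, fun x _ => Real.abs_cos_le_one _⟩ hbnegv
    intro x hx
    simp only [Function.comp_apply, hu, hv, Pi.mul_apply]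
    rw [hinv x hx, Real.cos_add_pi_div_two]
    ring
  have h2 : L (v ∘ g) = L u := by
    apply heq _ _ ⟨1, fun x _ => Real.abs_sin_le_one _⟩ hbu
    intro x hx
    simp only [Function.comp_apply, hu, hv]
    rw [hinv x hx, Real.sin_add_pi_div_two]
  have hLu : L (u ∘ g) = L u := hcomp u hbu g hgpos hgt
  have hLv : L (v ∘ g) = L v := hcomp v hbv g hgpos hgt
  have hab1 : L u = -L v := by
    have := h1
    rw [hLu, hmul _ _ ⟨1, by norm_num⟩ hbv, hconst] at this
    linarith
  have hab2 : L v = L u := by rw [← hLv, h2]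
  have ha0 : L u = 0 := by linarith
  have hb0 : L v = 0 := by linarith
  -- but L(u*u) + L(v*v) = L 1 = 1
  have hbu2 : BddOn (u*u) := by
    refine ⟨1, fun x _ => ?_⟩
    simp only [Pi.mul_apply, abs_mul]
    exact mul_le_one₀ (Real.abs_cos_le_one _) (abs_nonneg _) (Real.abs_cos_le_one _)
  have hbv2 : BddOn (v*v) := by
    refine ⟨1, fun x _ => ?_⟩
    simp only [Pi.mul_apply, abs_mul]
    exact mul_le_one₀ (Real.abs_sin_le_one _) (abs_nonneg _) (Real.abs_sin_le_one _)
  have hone : u*u + v*v = fun _ => (1:ℝ) := by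
    funext x
    simp only [Pi.add_apply, Pi.mul_apply, hu, hv]
    linear_combination Real.sin_sq_add_cos_sq (1/x)
  have : L u * L u + L v * L v = 1 := by
    rw [← hmul _ _ hbu hbu, ← hmul _ _ hbv hbv, ← hadd _ _ hbu2 hbv2, hone, hconst]
  rw [ha0, hb0] at this
  norm_num at this
end

section
/- Let M be a compact (or pre-compact) metric space and P ≠ 0, P' two finite uniform Borel measures on M, where uniform means: there is an increasing sequence of open sets M_n with union M and radii r_n > 0 such that for all x, y ∈ M_n and all 0 < r < r_n, the measure of B(x,r) equals the measure of B(y,r). Then there exists l ∈ ℝ with P' = l·P; in particular any two uniform Borel probability measures on M coincide. -/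
open MeasureTheory

/-- A Borel measure is uniform if there is an increasing sequence of open sets `Mₙ`
exhausting the space and radii `rₙ > 0` such that all balls of the same radius
`r' < rₙ` centered in `Mₙ` have the same measure. -/
def IsUniformMeasure {M : Type*} [MetricSpace M] [MeasurableSpace M] (μ : Measure M) :
    Prop :=
  ∃ (Ms : ℕ → Set M) (r : ℕ → ℝ),
    (∀ n, IsOpen (Ms n)) ∧ Monotone Ms ∧ (⋃ n, Ms n) = Set.univ ∧ (∀ n, 0 < r n) ∧
    ∀ n, ∀ x ∈ Ms n, ∀ y ∈ Ms n, ∀ r' : ℝ, 0 < r' → r' < r n →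
      μ (Metric.ball x r') = μ (Metric.ball y r')

/-- Key Fubini identity: integrating the `ν`-measure of balls intersected with `U` against
`μ` equals integrating the `μ`-measure of balls over `U` against `ν`. -/
lemma key_fubini {M : Type*} [MetricSpace M] [SecondCountableTopology M]
    [MeasurableSpace M] [BorelSpace M]
    (μ ν : Measure M) [SFinite μ] [SFinite ν] (U : Set M) (hU : IsOpen U) (r : ℝ) :
    ∫⁻ x, ν (Metric.ball x r ∩ U) ∂μ = ∫⁻ y in U, μ (Metric.ball y r) ∂ν := by
  set S : Set (M × M) := {p | dist p.1 p.2 < r ∧ p.2 ∈ U} with hS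
  set f : M × M → ENNReal := S.indicator 1 with hf
  have hSopen : IsOpen S := by
    apply IsOpen.inter
    · exact isOpen_lt continuous_dist continuous_const
    · exact hU.preimage continuous_snd
  have hSm : MeasurableSet S := hSopen.measurableSet
  have h1 : ∀ x, ∫⁻ y, f (x, y) ∂ν = ν (Metric.ball x r ∩ U) := by
    intro x
    have he : (fun y => f (x, y)) = (Metric.ball x r ∩ U).indicator (1 : M → ENNReal) := by
      ext y
      by_cases h : dist x y < r ∧ y ∈ U
      · rw [hf, Set.indicator_of_mem (show (x,y) ∈ S from h),
          Set.indicator_of_mem (by simpa [Metric.mem_ball, dist_comm] using h)]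
        rfl
      · rw [hf, Set.indicator_of_notMem (show (x,y) ∉ S from h),
          Set.indicator_of_notMem (by simpa [Metric.mem_ball, dist_comm] using h)]
    rw [he, lintegral_indicator_one (measurableSet_ball.inter hU.measurableSet)]
  have h2 : ∀ y, ∫⁻ x, f (x, y) ∂μ =
      U.indicator (fun y => μ (Metric.ball y r)) y := by
    intro y
    by_cases hy : y ∈ U
    · have he : (fun x => f (x, y)) = (Metric.ball y r).indicator (1 : M → ENNReal) := by
        ext x
        by_cases h : dist x y < r
        · rw [hf, Set.indicator_of_mem (show (x,y) ∈ S from ⟨h, hy⟩),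
            Set.indicator_of_mem (Metric.mem_ball.mpr h)]
          rfl
        · rw [hf, Set.indicator_of_notMem (show (x,y) ∉ S from fun hc => h hc.1),
            Set.indicator_of_notMem (fun hc => h (Metric.mem_ball.mp hc))]
      rw [he, lintegral_indicator_one measurableSet_ball, Set.indicator_of_mem hy]
    · rw [Set.indicator_of_notMem hy]
      have he : ∀ x : M, f (x, y) = 0 := fun x =>
        Set.indicator_of_notMem (show (x,y) ∉ S from fun hc => hy hc.2) _
      simp [he]
  have hmeas : AEMeasurable (Function.uncurry fun x y => f (x, y)) (μ.prod ν) := by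
    have he : (Function.uncurry fun x y => f (x, y)) = f := by
      ext p; rfl
    rw [he, hf]
    exact (measurable_one.indicator hSm).aemeasurable
  calc ∫⁻ x, ν (Metric.ball x r ∩ U) ∂μ
      = ∫⁻ x, ∫⁻ y, f (x, y) ∂ν ∂μ := by simp_rw [h1]
    _ = ∫⁻ y, ∫⁻ x, f (x, y) ∂μ ∂ν := lintegral_lintegral_swap hmeas
    _ = ∫⁻ y, U.indicator (fun y => μ (Metric.ball y r)) y ∂ν := by simp_rw [h2]
    _ = ∫⁻ y in U, μ (Metric.ball y r) ∂ν := lintegral_indicator hU.measurableSet _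

/-- From a uniform measure on a compact space, extract a single radius below which
all balls (with arbitrary centers) of equal radius have equal measure. -/
lemma IsUniformMeasure.exists_radius {M : Type*} [MetricSpace M] [CompactSpace M]
    [MeasurableSpace M] {μ : Measure M} (h : IsUniformMeasure μ) :
    ∃ ε : ℝ, 0 < ε ∧ ∀ (x y : M) (r : ℝ), 0 < r → r < ε →
      μ (Metric.ball x r) = μ (Metric.ball y r) := by
  obtain ⟨Ms, rr, hopen, hmono, hunion, hrpos, hunif⟩ := h
  obtain ⟨n, hn⟩ : ∃ n, (Set.univ : Set M) ⊆ Ms n :=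
    isCompact_univ.elim_directed_cover Ms hopen (hunion ▸ subset_rfl) hmono.directed_le
  exact ⟨rr n, hrpos n, fun x y r h0 hr =>
    hunif n x (hn (Set.mem_univ x)) y (hn (Set.mem_univ y)) r h0 hr⟩

/-- Christensen's theorem: two finite uniform Borel measures on a compact metric space
are proportional; in particular two uniform probability measures coincide. -/
theorem uniform_measures_proportional {M : Type*} [MetricSpace M] [CompactSpace M]
    [MeasurableSpace M] [BorelSpace M] (P P' : Measure M)
    [IsFiniteMeasure P] [IsFiniteMeasure P'] (hP : P ≠ 0)
    (hPu : IsUniformMeasure P) (hP'u : IsUniformMeasure P') :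
    (∃ l : ENNReal, P' = l • P) ∧
    (IsProbabilityMeasure P → IsProbabilityMeasure P' → P' = P) := by
  have hPuniv : P Set.univ ≠ 0 := fun h => hP (Measure.measure_univ_eq_zero.mp h)
  have hne : Nonempty M := by
    by_contra h
    exact hPuniv (by rw [Set.univ_eq_empty_iff.mpr (not_nonempty_iff.mp h)]; simp)
  obtain ⟨ε₁, hε₁, hunifP⟩ := hPu.exists_radius
  obtain ⟨ε₂, hε₂, hunifP'⟩ := hP'u.exists_radius
  set ε : ℝ := min ε₁ ε₂ with hε
  have hεpos : 0 < ε := lt_min hε₁ hε₂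
  have hunP : ∀ (x y : M) (r : ℝ), 0 < r → r < ε → P (Metric.ball x r) = P (Metric.ball y r) :=
    fun x y r h0 hr => hunifP x y r h0 (hr.trans_le (min_le_left _ _))
  have hunP' : ∀ (x y : M) (r : ℝ), 0 < r → r < ε → P' (Metric.ball x r) = P' (Metric.ball y r) :=
    fun x y r h0 hr => hunifP' x y r h0 (hr.trans_le (min_le_right _ _))
  set x₀ : M := Classical.arbitrary M with hx₀
  -- the common ball measures
  set φ : ℝ → ENNReal := fun r => P (Metric.ball x₀ r) with hφ
  set ψ : ℝ → ENNReal := fun r => P' (Metric.ball x₀ r) with hψ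
  have hφpos : ∀ r : ℝ, 0 < r → r < ε → φ r ≠ 0 := by
    intro r h0 hr hzero
    obtain ⟨t, ht⟩ := isCompact_univ.elim_finite_subcover (fun x : M => Metric.ball x r)
      (fun x => Metric.isOpen_ball) (fun x _ => Set.mem_iUnion.2 ⟨x, Metric.mem_ball_self h0⟩)
    have hle : P Set.univ ≤ ∑ x ∈ t, P (Metric.ball x r) :=
      (measure_mono ht).trans (measure_biUnion_finset_le t _)
    have hsum : ∑ x ∈ t, P (Metric.ball x r) = 0 := by
      apply Finset.sum_eq_zero
      intro x _
      rw [hunP x x₀ r h0 hr]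
      exact hzero
    exact hPuniv (le_antisymm (hsum ▸ hle) (by simp))
  have hφtop : ∀ r : ℝ, φ r ≠ ⊤ := fun r => measure_ne_top P _
  -- the scalar
  set l : ENNReal := P' Set.univ / P Set.univ with hl
  have hltop : l ≠ ⊤ :=
    (ENNReal.div_lt_top (measure_ne_top P' _) hPuniv).ne
  -- ψ r = φ r * l for small r
  have hψφ : ∀ r : ℝ, 0 < r → r < ε → ψ r = φ r * l := by
    intro r h0 hr
    have hkey := key_fubini P P' Set.univ isOpen_univ r
    have hL : ∫⁻ x, P' (Metric.ball x r ∩ Set.univ) ∂P = ψ r * P Set.univ := by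
      rw [lintegral_congr (fun x => by rw [Set.inter_univ, hunP' x x₀ r h0 hr])]
      exact lintegral_const _
    have hR : ∫⁻ y in Set.univ, P (Metric.ball y r) ∂P' = φ r * P' Set.univ := by
      rw [Measure.restrict_univ, lintegral_congr (fun y => hunP y x₀ r h0 hr)]
      exact lintegral_const _
    have hbal : ψ r * P Set.univ = φ r * P' Set.univ := by rw [← hL, ← hR, hkey]
    calc ψ r = ψ r * (P Set.univ / P Set.univ) := by
          rw [ENNReal.div_self hPuniv (measure_ne_top P _), mul_one]
      _ = ψ r * P Set.univ / P Set.univ := (mul_div_assoc _ _ _).symm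
      _ = φ r * P' Set.univ / P Set.univ := by rw [hbal]
      _ = φ r * (P' Set.univ / P Set.univ) := mul_div_assoc _ _ _
      _ = φ r * l := rfl
  -- main estimate: for closed F inside open U we can find a good radius
  have hradius : ∀ (U F : Set M), IsOpen U → IsClosed F → F ⊆ U →
      ∃ r : ℝ, 0 < r ∧ r < ε ∧ ∀ x ∈ F, Metric.ball x r ⊆ U := by
    intro U F hUo hFc hFU
    obtain ⟨δ, hδ, hδsub⟩ := hFc.isCompact.exists_thickening_subset_open hUo hFU
    refine ⟨min δ ε / 2, by positivity, ?_, ?_⟩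
    · calc min δ ε / 2 ≤ ε / 2 := by
            have := min_le_right δ ε; linarith
        _ < ε := by linarith
    · intro x hx
      refine subset_trans ?_ ((Metric.ball_subset_thickening hx δ).trans hδsub)
      apply Metric.ball_subset_ball
      have := min_le_left δ ε; linarith
  -- the two one-sided estimates for closed F ⊆ U
  have hest1 : ∀ (U F : Set M), IsOpen U → IsClosed F → F ⊆ U → P' F ≤ l * P U := by
    intro U F hUo hFc hFU
    obtain ⟨r, h0, hr, hsub⟩ := hradius U F hUo hFc hFU
    have hkey := key_fubini P' P U hUo r
    have hR : ∫⁻ y in U, P' (Metric.ball y r) ∂P = ψ r * P U := by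
      have hcongr : ∫⁻ y in U, P' (Metric.ball y r) ∂P = ∫⁻ _ in U, ψ r ∂P :=
        setLIntegral_congr_fun hUo.measurableSet
          (fun y _ => hunP' y x₀ r h0 hr)
      rw [hcongr, setLIntegral_const]
    have hLlow : φ r * P' F ≤ ∫⁻ x, P (Metric.ball x r ∩ U) ∂P' := by
      have hcongr : ∫⁻ x in F, P (Metric.ball x r ∩ U) ∂P' = ∫⁻ _ in F, φ r ∂P' :=
        setLIntegral_congr_fun hFc.measurableSet
          (fun x hx => by
            rw [Set.inter_eq_self_of_subset_left (hsub x hx)]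
            exact hunP x x₀ r h0 hr)
      rw [← setLIntegral_const F (φ r), ← hcongr]
      exact setLIntegral_le_lintegral _ _
    have hchain : φ r * P' F ≤ φ r * (l * P U) := by
      calc φ r * P' F ≤ ψ r * P U := hLlow.trans (le_of_eq (hkey.trans hR))
        _ = φ r * l * P U := by rw [hψφ r h0 hr]
        _ = φ r * (l * P U) := mul_assoc _ _ _
    exact (ENNReal.mul_le_mul_iff_right (hφpos r h0 hr) (hφtop r)).mp hchain
  have hest2 : ∀ (U F : Set M), IsOpen U → IsClosed F → F ⊆ U → l * P F ≤ P' U := by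
    intro U F hUo hFc hFU
    obtain ⟨r, h0, hr, hsub⟩ := hradius U F hUo hFc hFU
    have hkey := key_fubini P P' U hUo r
    have hR : ∫⁻ y in U, P (Metric.ball y r) ∂P' = φ r * P' U := by
      have hcongr : ∫⁻ y in U, P (Metric.ball y r) ∂P' = ∫⁻ _ in U, φ r ∂P' :=
        setLIntegral_congr_fun hUo.measurableSet
          (fun y _ => hunP y x₀ r h0 hr)
      rw [hcongr, setLIntegral_const]
    have hLlow : ψ r * P F ≤ ∫⁻ x, P' (Metric.ball x r ∩ U) ∂P := by
      have hcongr : ∫⁻ x in F, P' (Metric.ball x r ∩ U) ∂P = ∫⁻ _ in F, ψ r ∂P :=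
        setLIntegral_congr_fun hFc.measurableSet
          (fun x hx => by
            rw [Set.inter_eq_self_of_subset_left (hsub x hx)]
            exact hunP' x x₀ r h0 hr)
      rw [← setLIntegral_const F (ψ r), ← hcongr]
      exact setLIntegral_le_lintegral _ _
    have hchain : φ r * (l * P F) ≤ φ r * P' U := by
      calc φ r * (l * P F) = φ r * l * P F := (mul_assoc _ _ _).symm
        _ = ψ r * P F := by rw [hψφ r h0 hr]
        _ ≤ φ r * P' U := hLlow.trans (le_of_eq (hkey.trans hR))
    exact (ENNReal.mul_le_mul_iff_right (hφpos r h0 hr) (hφtop r)).mp hchain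
  -- equality on open sets
  have hopen : ∀ U : Set M, IsOpen U → P' U = l * P U := by
    intro U hUo
    apply le_antisymm
    · rw [hUo.measure_eq_iSup_isClosed P']
      exact iSup_le fun F => iSup_le fun hFU => iSup_le fun hFc => hest1 U F hUo hFc hFU
    · calc l * P U = l * ⨆ (F) (_ : F ⊆ U) (_ : IsClosed F), P F := by
            rw [← hUo.measure_eq_iSup_isClosed P]
        _ ≤ P' U := by
            simp_rw [ENNReal.mul_iSup]
            exact iSup_le fun F => iSup_le fun hFU => iSup_le fun hFc => hest2 U F hUo hFc hFU
  -- conclude by outer regularity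
  haveI : (l • P).OuterRegular := (MeasureTheory.Measure.WeaklyRegular.smul hltop).toOuterRegular
  have hmain : P' = l • P := by
    ext s hs
    rw [Set.measure_eq_iInf_isOpen s P', Set.measure_eq_iInf_isOpen s (l • P)]
    exact iInf_congr fun U => iInf_congr fun _ => iInf_congr fun hUo => by
      rw [hopen U hUo, Measure.smul_apply, smul_eq_mul]
  refine ⟨⟨l, hmain⟩, fun h1 h2 => ?_⟩
  haveI := h1; haveI := h2
  have hl1 : l = 1 := by rw [hl, measure_univ, measure_univ, div_one]
  rw [hmain, hl1, one_smul]
end
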